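/- For the family of symmetric groups (Σ_p) with multiplication given by block sum of permutations, the splitting poset SP_n is isomorphic as a poset to the poset of nonempty proper subsets of {1,...,n} ordered by inclusion, via g(Σ_p × Σ_{n-p}) ↦ {g(1),...,g(p)}. -/

import Mathlib

def blockSub (n p : ℕ) : Subgroup (Equiv.Perm (Fin n)) where
  carrier := {g | ∀ i : Fin n, (i : ℕ) < p ↔ ((g i : ℕ) < p)}
  one_mem' := by intro i; simp
  mul_mem' := by
    intro a b ha hb i
    exact (hb i).trans (ha (b i))
  inv_mem' := by
    intro a ha i
    simpa using (ha (a⁻¹ i)).symm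

def firstBlockImage (n p : ℕ) (g : Equiv.Perm (Fin n)) : Finset (Fin n) :=
  (Finset.univ.filter fun i : Fin n => (i : ℕ) < p).image g

lemma mem_fbi {n p : ℕ} {g : Equiv.Perm (Fin n)} {x : Fin n} :
    x ∈ firstBlockImage n p g ↔ ((g⁻¹ x : Fin n) : ℕ) < p := by
  simp only [firstBlockImage, Finset.mem_image, Finset.mem_filter, Finset.mem_univ, true_and]
  constructor
  · rintro ⟨i, hi, rfl⟩; simpa using hi
  · intro h; exact ⟨g⁻¹ x, h, by simp⟩

lemma card_block (n p : ℕ) (hp : p ≤ n) :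
    (Finset.univ.filter fun i : Fin n => (i : ℕ) < p).card = p := by
  have : (Finset.univ.filter fun i : Fin n => (i : ℕ) < p)
      = Finset.map (Fin.castLEEmb hp) Finset.univ := by
    ext i
    simp only [Finset.mem_filter, Finset.mem_univ, true_and, Finset.mem_map]
    constructor
    · intro h; exact ⟨⟨i, h⟩, rfl⟩
    · rintro ⟨j, rfl⟩; exact j.2
  rw [this, Finset.card_map, Finset.card_univ, Fintype.card_fin]

lemma card_fbi {n p : ℕ} (g : Equiv.Perm (Fin n)) (hp : p ≤ n) :
    (firstBlockImage n p g).card = p := by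
  rw [firstBlockImage, Finset.card_image_of_injective _ g.injective, card_block n p hp]

lemma exists_refine {n p q : ℕ} (hpq : p ≤ q) (hq : q ≤ n) {S T : Finset (Fin n)}
    (hST : S ⊆ T) (hS : S.card = p) (hT : T.card = q) :
    ∃ k : Equiv.Perm (Fin n), (∀ i : Fin n, (i : ℕ) < p ↔ k i ∈ S) ∧
      (∀ i : Fin n, (i : ℕ) < q ↔ k i ∈ T) := by
  have hp : p ≤ n := hpq.trans hq
  have c1 : Fintype.card {i : Fin n // (i : ℕ) < p} = Fintype.card {x // x ∈ S} := by
    rw [Fintype.card_subtype, Fintype.card_coe, card_block n p hp, hS]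
  have hmid : (Finset.univ.filter fun i : Fin n => p ≤ (i : ℕ) ∧ (i : ℕ) < q)
      = (Finset.univ.filter fun i : Fin n => (i : ℕ) < q) \
        (Finset.univ.filter fun i : Fin n => (i : ℕ) < p) := by
    ext i
    simp only [Finset.mem_filter, Finset.mem_univ, true_and, Finset.mem_sdiff, not_lt]
    tauto
  have c2 : Fintype.card {i : Fin n // p ≤ (i : ℕ) ∧ (i : ℕ) < q}
      = Fintype.card {x // x ∈ T \ S} := by
    rw [Fintype.card_subtype, Fintype.card_coe, hmid, Finset.card_sdiff_of_subset, card_block n q hq,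
      card_block n p hp, Finset.card_sdiff_of_subset hST, hS, hT]
    intro i hi
    simp only [Finset.mem_filter, Finset.mem_univ, true_and] at *
    exact hi.trans_le hpq
  have hlast : (Finset.univ.filter fun i : Fin n => q ≤ (i : ℕ))
      = (Finset.univ.filter fun i : Fin n => (i : ℕ) < q)ᶜ := by
    ext i
    simp [not_lt]
  have c3 : Fintype.card {i : Fin n // q ≤ (i : ℕ)} = Fintype.card {x // x ∈ Tᶜ} := by
    rw [Fintype.card_subtype, Fintype.card_coe, hlast, Finset.card_compl, Finset.card_compl,
      card_block n q hq, hT, Fintype.card_fin]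
  let e1 := Fintype.equivOfCardEq c1
  let e2 := Fintype.equivOfCardEq c2
  let e3 := Fintype.equivOfCardEq c3
  set f : Fin n → Fin n := fun i =>
    if h1 : (i : ℕ) < p then (e1 ⟨i, h1⟩ : Fin n)
    else if h2 : (i : ℕ) < q then (e2 ⟨i, ⟨not_lt.mp h1, h2⟩⟩ : Fin n)
    else (e3 ⟨i, not_lt.mp h2⟩ : Fin n) with hf
  have hfS : ∀ i : Fin n, f i ∈ S ↔ (i : ℕ) < p := by
    intro i
    by_cases h1 : (i : ℕ) < p
    · simp only [hf, dif_pos h1]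
      exact ⟨fun _ => h1, fun _ => (e1 ⟨i, h1⟩).2⟩
    · by_cases h2 : (i : ℕ) < q
      · simp only [hf, dif_neg h1, dif_pos h2]
        have := (e2 ⟨i, ⟨not_lt.mp h1, h2⟩⟩).2
        rw [Finset.mem_sdiff] at this
        exact ⟨fun h => absurd h this.2, fun h => absurd h h1⟩
      · simp only [hf, dif_neg h1, dif_neg h2]
        have := (e3 ⟨i, not_lt.mp h2⟩).2
        rw [Finset.mem_compl] at this
        exact ⟨fun h => absurd (hST h) this, fun h => absurd h h1⟩
  have hfT : ∀ i : Fin n, f i ∈ T ↔ (i : ℕ) < q := by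
    intro i
    by_cases h1 : (i : ℕ) < p
    · simp only [hf, dif_pos h1]
      exact ⟨fun _ => h1.trans_le hpq, fun _ => hST (e1 ⟨i, h1⟩).2⟩
    · by_cases h2 : (i : ℕ) < q
      · simp only [hf, dif_neg h1, dif_pos h2]
        have := (e2 ⟨i, ⟨not_lt.mp h1, h2⟩⟩).2
        rw [Finset.mem_sdiff] at this
        exact ⟨fun _ => h2, fun _ => this.1⟩
      · simp only [hf, dif_neg h1, dif_neg h2]
        have := (e3 ⟨i, not_lt.mp h2⟩).2
        rw [Finset.mem_compl] at this
        exact ⟨fun h => absurd h this, fun h => absurd h h2⟩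
  have hinj : Function.Injective f := by
    intro i j hij
    have hSij : ((i : ℕ) < p) ↔ ((j : ℕ) < p) := by rw [← hfS i, ← hfS j, hij]
    have hTij : ((i : ℕ) < q) ↔ ((j : ℕ) < q) := by rw [← hfT i, ← hfT j, hij]
    by_cases h1 : (i : ℕ) < p
    · have h1' : (j : ℕ) < p := hSij.mp h1
      simp only [hf, dif_pos h1, dif_pos h1'] at hij
      have := e1.injective (Subtype.coe_injective hij)
      simpa using congrArg Subtype.val this
    · have h1' : ¬ (j : ℕ) < p := fun h => h1 (hSij.mpr h)
      by_cases h2 : (i : ℕ) < q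
      · have h2' : (j : ℕ) < q := hTij.mp h2
        simp only [hf, dif_neg h1, dif_pos h2, dif_neg h1', dif_pos h2'] at hij
        have := e2.injective (Subtype.coe_injective hij)
        simpa using congrArg Subtype.val this
      · have h2' : ¬ (j : ℕ) < q := fun h => h2 (hTij.mpr h)
        simp only [hf, dif_neg h1, dif_neg h2, dif_neg h1', dif_neg h2'] at hij
        have := e3.injective (Subtype.coe_injective hij)
        simpa using congrArg Subtype.val this
  refine ⟨Equiv.ofBijective f ((Finite.injective_iff_bijective).mp hinj), ?_, ?_⟩
  · intro i; exact (hfS i).symm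
  · intro i; exact (hfT i).symm

def spLePerm (n p q : ℕ) (g h : Equiv.Perm (Fin n)) : Prop :=
  p ≤ q ∧ ∃ k, g⁻¹ * k ∈ blockSub n p ∧ h⁻¹ * k ∈ blockSub n q

lemma blockSub_iff_fbi_eq {n p : ℕ} (g k : Equiv.Perm (Fin n)) :
    g⁻¹ * k ∈ blockSub n p ↔ firstBlockImage n p g = firstBlockImage n p k := by
  constructor
  · intro hm
    ext x
    rw [mem_fbi, mem_fbi]
    have := hm (k⁻¹ x)
    simp only [Equiv.Perm.mul_apply, Equiv.Perm.coe_inv, Equiv.apply_symm_apply] at this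
    exact this.symm
  · intro hEq i
    have hx : k i ∈ firstBlockImage n p k ↔ (i : ℕ) < p := by
      rw [mem_fbi]; simp
    rw [← hEq, mem_fbi] at hx
    simpa [Equiv.Perm.mul_apply] using hx.symm

theorem stmt_1 (n : ℕ) (hn : 2 ≤ n) :
    (∀ p (g : Equiv.Perm (Fin n)), 1 ≤ p → p ≤ n - 1 →
        (firstBlockImage n p g).Nonempty ∧ firstBlockImage n p g ≠ Finset.univ) ∧
    (∀ S : Finset (Fin n), S.Nonempty → S ≠ Finset.univ →
        ∃ p g, 1 ≤ p ∧ p ≤ n - 1 ∧ firstBlockImage n p g = S) ∧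
    (∀ p q g h, 1 ≤ p → p ≤ n - 1 → 1 ≤ q → q ≤ n - 1 →
        (firstBlockImage n p g = firstBlockImage n q h ↔ p = q ∧ g⁻¹ * h ∈ blockSub n p)) ∧
    (∀ p q g h, 1 ≤ p → p ≤ n - 1 → 1 ≤ q → q ≤ n - 1 →
        (spLePerm n p q g h ↔ firstBlockImage n p g ⊆ firstBlockImage n q h)) := by
  have hle : ∀ {p : ℕ}, p ≤ n - 1 → p ≤ n := fun h => h.trans (Nat.sub_le n 1)
  refine ⟨?_, ?_, ?_, ?_⟩
  · intro p g hp1 hpn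
    constructor
    · rw [← Finset.card_pos, card_fbi g (hle hpn)]; omega
    · intro hEq
      have hc := card_fbi g (hle hpn)
      rw [hEq, Finset.card_univ, Fintype.card_fin] at hc
      omega
  · intro S hS hSne
    have hcard : S.card ≤ n := by simpa using Finset.card_le_univ S
    have hlt : S.card < n := by
      rcases lt_or_eq_of_le hcard with h | h
      · exact h
      · exact absurd (Finset.eq_univ_of_card S (by rw [h, Fintype.card_fin])) hSne
    obtain ⟨k, hk, -⟩ := exists_refine (le_refl S.card) hcard (Finset.Subset.refl S) rfl rfl
    refine ⟨S.card, k, Finset.card_pos.mpr hS, by omega, ?_⟩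
    ext x
    rw [mem_fbi]
    have := hk (k⁻¹ x)
    simpa using this
  · intro p q g h hp1 hpn hq1 hqn
    constructor
    · intro hEq
      have hpq : p = q := by
        have h1 := card_fbi g (hle hpn)
        have h2 := card_fbi h (hle hqn)
        rw [hEq] at h1; omega
      subst hpq
      exact ⟨rfl, (blockSub_iff_fbi_eq g h).mpr hEq⟩
    · rintro ⟨rfl, hm⟩
      exact (blockSub_iff_fbi_eq g h).mp hm
  · intro p q g h hp1 hpn hq1 hqn
    constructor
    · rintro ⟨hpq, k, hgk, hhk⟩
      rw [blockSub_iff_fbi_eq] at hgk hhk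
      rw [hgk, hhk]
      intro x hx
      rw [mem_fbi] at hx ⊢
      exact hx.trans_le hpq
    · intro hsub
      have hpq : p ≤ q := by
        have h1 := card_fbi g (hle hpn)
        have h2 := card_fbi h (hle hqn)
        have := Finset.card_le_card hsub
        omega
      obtain ⟨k, hkS, hkT⟩ := exists_refine hpq (hle hqn) hsub (card_fbi g (hle hpn))
        (card_fbi h (hle hqn))
      refine ⟨hpq, k, ?_, ?_⟩
      · intro i
        have := (hkS i).trans mem_fbi
        simpa [Equiv.Perm.mul_apply] using this
      · intro i
        have := (hkT i).trans mem_fbi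
        simpa [Equiv.Perm.mul_apply] using this
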